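/- Given the jump formula [q] = −c₁ [φ] + c₂ [Dφ] with c₁, c₂ as above, substituting back yields the explicit local formula q_l = D_l φ_l + M_l⁻¹ t_{l,R} ((1/2)(1 − √T_r c₁)(t_{r,L}ᵀφ_r − t_{l,R}ᵀφ_l) + (√T_r/2) c₂ (t_{r,L}ᵀ D_r φ_r − t_{l,R}ᵀ D_l φ_l)), i.e. q_l depends only on φ_l, φ_r, and their derivative traces, not on q_r. -/
import Mathlib


open Matrix in
/-- Substituting the interface jump formula back yields an explicit local
formula for the discrete gradient `q_l`, independent of `q_r`. -/
theorem local_gradient_formula (n : ℕ) (hn : 1 ≤ n) (Tr : ℝ) (hTr : 0 < Tr)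
    (Ml Mr Dl Dr : Matrix (Fin n) (Fin n) ℝ) (dl dr : Fin n → ℝ)
    (hMl : Ml = Matrix.diagonal dl) (hdl : ∀ i, 0 < dl i)
    (hMr : Mr = Matrix.diagonal dr) (hdr : ∀ i, 0 < dr i)
    (tlR trL : Fin n → ℝ) (φl φr ql qr : Fin n → ℝ)
    (hql : ql = Dl.mulVec φl +
      ((1 / 2) * (trL ⬝ᵥ φr - tlR ⬝ᵥ φl)
        + Real.sqrt Tr / 2 * (trL ⬝ᵥ qr - tlR ⬝ᵥ ql)) • Ml⁻¹.mulVec tlR)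
    (hqr : qr = Dr.mulVec φr -
      (-(1 / 2) * (trL ⬝ᵥ φr - tlR ⬝ᵥ φl)
        + Real.sqrt Tr / 2 * (trL ⬝ᵥ qr - tlR ⬝ᵥ ql)) • Mr⁻¹.mulVec trL)
    (al ar c1 c2 : ℝ)
    (hal : al = tlR ⬝ᵥ Ml⁻¹.mulVec tlR) (har : ar = trL ⬝ᵥ Mr⁻¹.mulVec trL)
    (hc1 : c1 = (1 / 2) * (ar - al) / (1 + Real.sqrt Tr / 2 * (ar + al)))
    (hc2 : c2 = 1 / (1 + Real.sqrt Tr / 2 * (ar + al)))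
    (hjump : trL ⬝ᵥ qr - tlR ⬝ᵥ ql =
      -c1 * (trL ⬝ᵥ φr - tlR ⬝ᵥ φl)
        + c2 * (trL ⬝ᵥ Dr.mulVec φr - tlR ⬝ᵥ Dl.mulVec φl)) :
    ql = Dl.mulVec φl +
      ((1 / 2) * (1 - Real.sqrt Tr * c1) * (trL ⬝ᵥ φr - tlR ⬝ᵥ φl)
        + Real.sqrt Tr / 2 * c2 *
          (trL ⬝ᵥ Dr.mulVec φr - tlR ⬝ᵥ Dl.mulVec φl)) • Ml⁻¹.mulVec tlR := by
  rw [hjump] at hql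
  rw [hql]
  congr 1
  congr 1
  ring
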